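/- Suppose r(x)=λ∈(0,1) is constant and the points d₀,…,d_{N−1} lie in pairwise distinct T-orbits (no d_j is of the form T^p d_i with p≥0 and i≠j, nor T^p d_i with p≥1 and i=j). Then P_X is purely atomic if and only if b is constant on 𝕋, in which case P_X=δ_{b/(1−λ)}. -/

import Mathlib

open MeasureTheory Filter Topology

/-- The random series `X(x) = ∑_{n≥0} r_n(x) b(x + nα)` above the rotation by `α`,
where `r_n(x) = r(x) r(x+α) ⋯ r(x+(n−1)α)`; the circle is modelled as `ℝ` with
`1`-periodic data. -/
noncomputable def Xser (α : ℝ) (b r : ℝ → ℝ) (x : ℝ) : ℝ :=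
  ∑' n : ℕ, (∏ k ∈ Finset.range n, r (x + k * α)) * b (x + n * α)

/-- The arc `[d_i, d_{i+1})` of the circle (cyclically: the last arc is `[d_{N-1}, d_0 + 1)`),
viewed in `ℝ`. -/
def arc {N : ℕ} [NeZero N] (d : Fin N → ℝ) (i : Fin N) : Set ℝ :=
  if (i : ℕ) + 1 = N then Set.Ico (d i) (d (i + 1) + 1) else Set.Ico (d i) (d (i + 1))

namespace PA

open Finset Pointwise

variable {N : ℕ} [NeZero N]

noncomputable def len (d : Fin N → ℝ) (i : Fin N) : ℝ :=
  if (i : ℕ) + 1 = N then d (i + 1) + 1 - d i else d (i + 1) - d i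

lemma arc_eq (d : Fin N → ℝ) (i : Fin N) :
    arc d i = Set.Ico (d i) (d i + len d i) := by
  unfold arc len; split <;> congr 1 <;> ring

lemma fin_coe_add_one {i : Fin N} (h : (i : ℕ) + 1 ≠ N) :
    ((i + 1 : Fin N) : ℕ) = (i : ℕ) + 1 := by
  have h2 : (i : ℕ) + 1 < N := Nat.lt_of_le_of_ne i.isLt h
  have h1 : 1 % N = 1 := Nat.mod_eq_of_lt (by omega)
  simp [Fin.add_def, Fin.val_one', h1, Nat.mod_eq_of_lt h2]

lemma fin_last_add_one {i : Fin N} (h : (i : ℕ) + 1 = N) : (i + 1 : Fin N) = 0 := by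
  rcases eq_or_lt_of_le (Nat.one_le_iff_ne_zero.mpr (NeZero.ne N)) with h1 | h1
  · have : Subsingleton (Fin N) := by rw [← h1]; exact Fin.subsingleton_one
    exact Subsingleton.elim _ _
  · apply Fin.ext
    simp only [Fin.add_def, Fin.val_one', Fin.val_zero, Nat.mod_eq_of_lt h1]
    rw [h, Nat.mod_self]

variable {d : Fin N → ℝ} (hd : StrictMono d) (hdmem : ∀ i, d i ∈ Set.Ico (0 : ℝ) 1)

include hd hdmem in
lemma len_pos (i : Fin N) : 0 < len d i := by
  unfold len; split
  case isTrue h =>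
    have h1 := (hdmem (i + 1)).1
    have h2 := (hdmem i).2
    linarith
  case isFalse h =>
    have hlt : i < i + 1 := by
      rw [Fin.lt_def, fin_coe_add_one h]; omega
    have := hd hlt; linarith

noncomputable def zeta (d : Fin N → ℝ) : ℝ := Finset.univ.inf' univ_nonempty (len d)

lemma zeta_le (i : Fin N) : zeta d ≤ len d i := inf'_le _ (mem_univ i)

include hd hdmem in
lemma zeta_pos : 0 < zeta d :=
  (Finset.lt_inf'_iff _).mpr fun i _ => len_pos hd hdmem i

variable {b : ℝ → ℝ} (hbper : Function.Periodic b 1)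
  (hbconst : ∀ i : Fin N, ∀ x ∈ arc d i, ∀ y ∈ arc d i, b x = b y)

def beta (d : Fin N → ℝ) (b : ℝ → ℝ) (i : Fin N) : ℝ := b (d i)

include hd hdmem in
lemma mem_arc_self (i : Fin N) : d i ∈ arc d i := by
  rw [arc_eq]
  exact ⟨le_refl _, by linarith [len_pos hd hdmem i]⟩

include hd hdmem hbconst in
lemma bval (i : Fin N) {x : ℝ} (hx : x ∈ arc d i) : b x = beta d b i :=
  hbconst i x hx _ (mem_arc_self hd hdmem i)

include hbper in
lemma bper_int (m : ℤ) (x : ℝ) : b (x + m) = b x := by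
  simpa using (hbper.int_mul m) x

include hd hdmem in
lemma exists_mem_arc {u : ℝ} (h0 : 0 ≤ u) (h1 : u < 1) : ∃ i, d 0 + u ∈ arc d i := by
  classical
  set s := Finset.univ.filter (fun i : Fin N => d i ≤ d 0 + u) with hs
  have hne : s.Nonempty := ⟨0, by simp [hs]; linarith⟩
  refine ⟨s.max' hne, ?_⟩
  have hmem : s.max' hne ∈ s := s.max'_mem hne
  have hle : d (s.max' hne) ≤ d 0 + u := (Finset.mem_filter.mp hmem).2
  unfold arc; split
  case isTrue h =>
    have hz : d 0 ≤ d (s.max' hne + 1) := by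
      apply hd.monotone
      rw [Fin.le_def]; exact Nat.zero_le _
    exact ⟨hle, by linarith⟩
  case isFalse h =>
    refine ⟨hle, ?_⟩
    by_contra hcon
    push_neg at hcon
    have hmem1 : (s.max' hne + 1) ∈ s := Finset.mem_filter.mpr ⟨Finset.mem_univ _, hcon⟩
    have hle1 := s.le_max' _ hmem1
    have hlt : s.max' hne < s.max' hne + 1 := by
      rw [Fin.lt_def, fin_coe_add_one h]; omega
    exact absurd hle1 (not_le.mpr hlt)

include hd in
lemma arc_unique {x : ℝ} {i j : Fin N} (hi : x ∈ arc d i) (hj : x ∈ arc d j) : i = j := by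
  by_contra hne
  wlog hlt : (i : ℕ) < (j : ℕ) generalizing i j
  · have hvne : (i : ℕ) ≠ (j : ℕ) := fun hc => hne (Fin.ext hc)
    exact this hj hi (Ne.symm hne) (by omega)
  have hnl : (i : ℕ) + 1 ≠ N := by have := j.isLt; omega
  have hxi : x < d (i + 1) := by
    unfold arc at hi; rw [if_neg hnl] at hi; exact hi.2
  have hij : i + 1 ≤ j := by rw [Fin.le_def, fin_coe_add_one hnl]; omega
  have hmono : d (i + 1) ≤ d j := hd.monotone hij
  have hxj : d j ≤ x := by
    unfold arc at hj; split_ifs at hj <;> exact hj.1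
  linarith

noncomputable def breal (d : Fin N → ℝ) (b : ℝ → ℝ) (u : ℝ) : ℝ :=
  ∑ i : Fin N, Set.indicator (Set.Ico (d i - d 0) (d i - d 0 + len d i)) (fun _ => beta d b i) u

lemma mem_interval_iff {u : ℝ} {i : Fin N} :
    u ∈ Set.Ico (d i - d 0) (d i - d 0 + len d i) ↔ d 0 + u ∈ arc d i := by
  rw [arc_eq, Set.mem_Ico, Set.mem_Ico]
  constructor
  · rintro ⟨h1, h2⟩; exact ⟨by linarith, by linarith⟩
  · rintro ⟨h1, h2⟩; exact ⟨by linarith, by linarith⟩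

include hd hdmem hbper hbconst in
lemma mem_arc_reduce (x : ℝ) :
    ∃ i, d 0 + Int.fract (x - d 0) ∈ arc d i ∧ b x = beta d b i := by
  have h0 := Int.fract_nonneg (x - d 0)
  have h1 := Int.fract_lt_one (x - d 0)
  obtain ⟨i, hi⟩ := exists_mem_arc hd hdmem h0 h1
  refine ⟨i, hi, ?_⟩
  have hxe : x = d 0 + Int.fract (x - d 0) + (⌊x - d 0⌋ : ℤ) := by
    rw [Int.fract]; ring
  rw [hxe, bper_int hbper]
  exact bval hd hdmem hbconst i hi

include hd hdmem hbper hbconst in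
lemma b_eq_breal (x : ℝ) : b x = breal d b (Int.fract (x - d 0)) := by
  obtain ⟨i, hi, hbx⟩ := mem_arc_reduce hd hdmem hbper hbconst x
  rw [hbx]
  unfold breal
  rw [Finset.sum_eq_single_of_mem i (Finset.mem_univ i)]
  · rw [Set.indicator_of_mem (mem_interval_iff.mpr hi)]
  · intro j _ hji
    apply Set.indicator_of_notMem
    intro hmem
    exact hji (arc_unique hd (mem_interval_iff.mp hmem) hi)

include hd hdmem hbper hbconst in
lemma b_measurable : Measurable b := by
  have hb : b = fun x => breal d b (Int.fract (x - d 0)) :=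
    funext (b_eq_breal hd hdmem hbper hbconst)
  rw [hb]
  have h1 : Measurable (breal d b) := by
    unfold breal
    exact Finset.measurable_sum _ fun i _ => measurable_const.indicator measurableSet_Ico
  exact h1.comp (measurable_id.sub measurable_const).fract

noncomputable def bBound (d : Fin N → ℝ) (b : ℝ → ℝ) : ℝ :=
  Finset.univ.sup' univ_nonempty (fun i => |beta d b i|)

lemma bBound_nonneg : 0 ≤ bBound d b := by
  unfold bBound
  exact le_trans (abs_nonneg (beta d b 0)) (Finset.le_sup' (fun i => |beta d b i|) (mem_univ 0))

include hd hdmem hbper hbconst in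
lemma abs_b_le (x : ℝ) : |b x| ≤ bBound d b := by
  obtain ⟨i, _, hbx⟩ := mem_arc_reduce hd hdmem hbper hbconst x
  rw [hbx]
  unfold bBound
  exact Finset.le_sup' (fun j => |beta d b j|) (mem_univ i)

noncomputable def eend (d : Fin N → ℝ) (i : Fin N) : ℝ := d i + len d i

def cshift (N : ℕ) (i : Fin N) : ℤ := if (i : ℕ) + 1 = N then 1 else 0

lemma eend_eq (i : Fin N) : eend d i = d (i + 1) + (cshift N i : ℝ) := by
  unfold eend len cshift; split <;> simp <;> ring

include hd hdmem hbconst in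
lemma b_at_right (j : Fin N) {u : ℝ} (h0 : 0 ≤ u) (h1 : u < zeta d) :
    b (d j + u) = beta d b j := by
  apply bval hd hdmem hbconst j
  rw [arc_eq]
  exact ⟨by linarith, by linarith [zeta_le (d := d) j]⟩

include hd hdmem hbconst in
lemma b_at_left (i : Fin N) {u : ℝ} (h0 : 0 < u) (h1 : u ≤ zeta d) :
    b (eend d i - u) = beta d b i := by
  apply bval hd hdmem hbconst i
  rw [arc_eq]
  unfold eend
  constructor
  · have := zeta_le (d := d) i; linarith
  · have := len_pos hd hdmem i; linarith

variable {lam α : ℝ}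

include hd hdmem hbper hbconst in
lemma summable_term (hlam : lam ∈ Set.Ioo (0:ℝ) 1) (x : ℝ) :
    Summable (fun n : ℕ => lam ^ n * b (x + n * α)) := by
  refine Summable.of_abs ?_
  have hg : Summable (fun n : ℕ => bBound d b * lam ^ n) :=
    (summable_geometric_of_lt_one hlam.1.le hlam.2).mul_left _
  refine Summable.of_nonneg_of_le (fun n => abs_nonneg _) (fun n => ?_) hg
  rw [abs_mul, abs_pow, abs_of_pos hlam.1, mul_comm]
  exact mul_le_mul_of_nonneg_right (abs_b_le hd hdmem hbper hbconst _) (pow_nonneg hlam.1.le n)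

lemma Xser_eq (x : ℝ) :
    Xser α b (fun _ => lam) x = ∑' n : ℕ, lam ^ n * b (x + n * α) := by
  unfold Xser
  exact tsum_congr fun n => by rw [Finset.prod_const, Finset.card_range]

include hd hdmem hbper hbconst in
lemma Xser_measurable (hlam : lam ∈ Set.Ioo (0:ℝ) 1) :
    Measurable (Xser α b (fun _ => lam)) := by
  have hXeq : Xser α b (fun _ => lam) = fun x => ∑' n : ℕ, lam ^ n * b (x + n * α) :=
    funext Xser_eq
  rw [hXeq]
  apply measurable_of_tendsto_metrizable
    (f := fun (k : ℕ) (x : ℝ) => ∑ n ∈ Finset.range k, lam ^ n * b (x + n * α))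
  · intro k
    apply Finset.measurable_sum
    intro n _
    exact ((b_measurable hd hdmem hbper hbconst).comp (measurable_add_const _)).const_mul _
  · rw [tendsto_pi_nhds]
    intro x
    exact (summable_term hd hdmem hbper hbconst hlam x).hasSum.tendsto_sum_nat

lemma Xser_const (hlam : lam ∈ Set.Ioo (0:ℝ) 1) (β : ℝ) (hb : ∀ x, b x = β) (x : ℝ) :
    Xser α b (fun _ => lam) x = β / (1 - lam) := by
  rw [Xser_eq]
  simp only [hb]
  rw [tsum_mul_right, tsum_geometric_of_lt_one hlam.1.le hlam.2, div_eq_mul_inv, mul_comm]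

lemma map_const_measure (hlam : lam ∈ Set.Ioo (0:ℝ) 1) (β : ℝ) (hb : ∀ x, b x = β) :
    Measure.map (Xser α b fun _ => lam) (volume.restrict (Set.Ico (0:ℝ) 1))
      = Measure.dirac (β / (1 - lam)) := by
  have h1 : Xser α b (fun _ => lam) = fun _ => β / (1 - lam) :=
    funext (Xser_const hlam β hb)
  rw [h1, Measure.map_const]
  simp [Real.volume_Ico]

/-- Dirichlet-type density: hitting `[c + m - t, c + m)` by the forward orbit. -/
lemma dense_step {α : ℝ} (hirr : Irrational α) (c t : ℝ) (ht : 0 < t) (x : ℝ) :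
    ∃ (n : ℕ) (m : ℤ), 0 < c + m - (x + n * α) ∧ c + m - (x + n * α) ≤ t := by
  classical
  set nn : ℕ := ⌈1/t⌉₊ + 1 with hnn
  obtain ⟨j, k, hk0, hkn, hjk⟩ := Real.exists_int_int_abs_mul_sub_le α (n := nn) (by omega)
  set η : ℝ := k * α - j with hη
  set w : ℝ := c - x with hw
  clear_value nn η w
  have hη0 : η ≠ 0 := by
    have h1 : Irrational ((k : ℝ) * α) := (hirr.intCast_mul (ne_of_gt hk0))
    intro hc
    exact (h1.ne_int j) (by rw [hη] at hc; linarith)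
  have hηt : |η| < t := by
    have h1 : (1:ℝ)/t ≤ (⌈1/t⌉₊ : ℝ) := Nat.le_ceil _
    have h2 : (1:ℝ)/t < (nn:ℝ) + 1 := by
      rw [hnn]; push_cast; linarith
    have h3 : (1:ℝ) < t * ((nn:ℝ) + 1) := by
      rw [div_lt_iff₀ ht] at h2; linarith
    have h4 : (1:ℝ)/((nn:ℝ)+1) < t := by
      rw [div_lt_iff₀ (by positivity)]; linarith
    calc |η| ≤ 1/((nn:ℝ)+1) := hjk
    _ < t := h4
  -- find q, M with  w + M - t ≤ q η < w + M
  have key : ∃ (q : ℕ) (M : ℤ), w + M - t ≤ q * η ∧ (q:ℝ) * η < w + M := by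
    rcases lt_or_gt_of_ne hη0 with hneg | hpos
    · -- η < 0
      set η' : ℝ := -η with hη'
      have hη'pos : 0 < η' := by rw [hη']; linarith
      have hη't : η' < t := by have := abs_lt.mp hηt; rw [hη']; linarith
      set M : ℤ := -(⌈w⌉ + 1) with hM
      set L : ℝ := -w - M with hL
      have hLpos : 0 < L := by
        have := Int.le_ceil w
        rw [hL, hM]; push_cast; linarith
      set q : ℕ := ⌊L/η'⌋₊ + 1 with hq
      clear_value η' M L q
      have hq1 : L < q * η' := by
        have h5 : L/η' < (q:ℝ) := by
          rw [hq]; push_cast; exact Nat.lt_floor_add_one _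
        calc L = (L/η') * η' := by field_simp
        _ < q * η' := mul_lt_mul_of_pos_right h5 hη'pos
      have hq2 : (q:ℝ) * η' ≤ L + η' := by
        have h5 : (q:ℝ) ≤ L/η' + 1 := by
          rw [hq]; push_cast
          have := Nat.floor_le (a := L/η') (by positivity)
          linarith
        have h6 : (q:ℝ) * η' ≤ (L/η' + 1) * η' := mul_le_mul_of_nonneg_right h5 hη'pos.le
        have h7 : (L/η' + 1) * η' = L + η' := by field_simp
        linarith
      have he : (q:ℝ) * η = -((q:ℝ) * η') := by rw [hη']; ring
      refine ⟨q, M, ?_, ?_⟩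
      · rw [he]
        have hLw : L = -w - M := hL
        linarith
      · rw [he]
        have hLw : L = -w - M := hL
        linarith
    · -- η > 0
      have hηtt : η < t := by have := le_abs_self η; linarith
      set M : ℤ := ⌈t - w⌉ with hM
      set L : ℝ := w + M - t with hL
      have hLpos : 0 ≤ L := by
        have := Int.le_ceil (t - w)
        rw [hL]; linarith
      set q : ℕ := ⌈L/η⌉₊ with hq
      clear_value M L q
      have hq1 : L ≤ q * η := by
        have h5 : L/η ≤ (q:ℝ) := by rw [hq]; exact Nat.le_ceil _
        calc L = (L/η) * η := by field_simp
        _ ≤ q * η := mul_le_mul_of_nonneg_right h5 hpos.le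
      have hq2 : (q:ℝ) * η < L + η := by
        have h5 : (q:ℝ) < L/η + 1 := by
          rw [hq]; exact Nat.ceil_lt_add_one (by positivity)
        have h6 : (q:ℝ) * η < (L/η + 1) * η := mul_lt_mul_of_pos_right h5 hpos
        have h7 : (L/η + 1) * η = L + η := by field_simp
        linarith
      have hLw : L = w + M - t := hL
      exact ⟨q, M, by linarith, by linarith⟩
  obtain ⟨q, M, h1, h2⟩ := key
  have hkr : ((k.toNat : ℕ) : ℝ) = (k : ℝ) := by
    exact_mod_cast congrArg (fun z : ℤ => (z : ℝ)) (Int.toNat_of_nonneg hk0.le)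
  have hcast : ((q * k.toNat : ℕ) : ℝ) * α = q * η + q * j := by
    push_cast
    rw [hkr, hη]
    ring
  refine ⟨q * k.toNat, M + q * j, ?_, ?_⟩
  · rw [hcast]
    push_cast
    have hww : w = c - x := hw
    linarith
  · rw [hcast]
    push_cast
    have hww : w = c - x := hw
    linarith

lemma round_min (q : ℝ) (M : ℤ) : |q - round q| ≤ |q - M| := by
  by_cases h : M = round q
  · rw [h]
  · have h2 : (1:ℤ) ≤ |round q - M| := by
      exact Int.one_le_abs (sub_ne_zero.mpr (Ne.symm h))
    have h1 : (1:ℝ) ≤ |(round q : ℝ) - M| := by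
      calc (1:ℝ) = ((1:ℤ):ℝ) := by norm_num
      _ ≤ ((|round q - M| : ℤ) : ℝ) := by exact_mod_cast h2
      _ = |(round q : ℝ) - M| := by push_cast; ring_nf
    have h3 := abs_sub_round q
    have h4 : |(round q:ℝ) - M| ≤ |(round q:ℝ) - q| + |q - M| := abs_sub_le _ _ _
    have h5 : |(round q:ℝ) - q| = |q - round q| := abs_sub_comm _ _
    linarith

include hd hdmem hbper hbconst in
lemma crossing_of_ne {t y : ℝ} (ht0 : 0 < t) (htz : t < zeta d)
    (hne : b (y + t) ≠ b y) :
    ∃ (i : Fin N) (m : ℤ), y < d (i + 1) + m ∧ d (i + 1) + m ≤ y + t ∧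
      b y = beta d b i ∧ b (y + t) = beta d b (i + 1) := by
  obtain ⟨i, hi, hby⟩ := mem_arc_reduce hd hdmem hbper hbconst y
  set y' : ℝ := d 0 + Int.fract (y - d 0) with hy'
  have hyy : y = y' + (⌊y - d 0⌋ : ℤ) := by rw [hy', Int.fract]; push_cast; ring
  clear_value y'
  have harc := hi
  rw [arc_eq] at harc
  have hbyt : b (y + t) = b (y' + t) := by
    rw [hyy, show y' + (⌊y - d 0⌋ : ℤ) + t = (y' + t) + ((⌊y - d 0⌋ : ℤ) : ℝ) by ring]
    exact bper_int hbper _ _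
  by_cases hcase : y' + t < eend d i
  · exfalso
    apply hne
    rw [hbyt, hby]
    apply bval hd hdmem hbconst i
    rw [arc_eq]
    unfold eend at hcase
    exact ⟨by linarith [harc.1], hcase⟩
  push_neg at hcase
  set wv : ℝ := y' + t - eend d i with hwv
  have harc2 : y' < eend d i := harc.2
  have hwv0 : 0 ≤ wv := by rw [hwv]; linarith
  have hwvt : wv < t := by rw [hwv]; linarith
  have he := eend_eq (d := d) i
  have hbt : b (y + t) = beta d b (i + 1) := by
    rw [hbyt]
    rw [show y' + t = (d (i+1) + wv) + ((cshift N i : ℤ) : ℝ) by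
      rw [hwv, he]; ring]
    rw [bper_int hbper (cshift N i)]
    exact b_at_right hd hdmem hbconst (i+1) hwv0 (lt_trans hwvt htz)
  refine ⟨i, cshift N i + ⌊y - d 0⌋, ?_, ?_, hby, hbt⟩
  · push_cast
    linarith [harc2, he, hyy]
  · push_cast
    linarith [hcase, he, hyy]

set_option maxHeartbeats 1000000 in
include hd hdmem hbper hbconst in
lemma beta_const_of_atom (hirr : Irrational α) (hlam : lam ∈ Set.Ioo (0:ℝ) 1)
    (horb : ∀ i j : Fin N, ∀ p : ℕ, ∀ m : ℤ, d j = d i + p * α + m → i = j ∧ p = 0)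
    {v : ℝ} (hA : volume ((Xser α b fun _ => lam) ⁻¹' {v} ∩ Set.Ico (0:ℝ) 1) ≠ 0)
    (i0 : Fin N) : beta d b (i0 + 1) = beta d b i0 := by
  classical
  by_contra hne0
  set C : ℝ := bBound d b with hC
  have hC0 : 0 ≤ C := bBound_nonneg
  -- the active set and minimal jump
  set act : Finset (Fin N) :=
    Finset.univ.filter (fun i : Fin N => beta d b (i+1) ≠ beta d b i) with hact
  have hi0act : i0 ∈ act := by rw [hact]; simp [hne0]
  have hactne : act.Nonempty := ⟨i0, hi0act⟩
  set δ : ℝ := act.inf' hactne (fun i => |beta d b (i+1) - beta d b i|) with hδ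
  have hδpos : 0 < δ := by
    rw [hδ]
    rw [Finset.lt_inf'_iff]
    intro i hi
    rw [hact, Finset.mem_filter] at hi
    exact abs_pos.mpr (sub_ne_zero.mpr hi.2)
  have hδle : δ ≤ |beta d b (i0+1) - beta d b i0| := Finset.inf'_le _ hi0act
  -- choose P
  obtain ⟨P0, hP0⟩ := exists_pow_lt_of_lt_one
    (x := δ * (1 - lam) / (2 * C + 1)) (by
      have : 0 < 1 - lam := by linarith [hlam.2]
      positivity) hlam.2
  set P : ℕ := P0 + 2 with hP'
  have hP : 2 * C * lam ^ P < δ * (1 - lam) := by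
    have h1 : lam ^ P ≤ lam ^ P0 :=
      pow_le_pow_of_le_one hlam.1.le hlam.2.le (by omega)
    have h2C : (0:ℝ) < 2 * C + 1 := by linarith
    have h2 : lam ^ P0 * (2 * C + 1) < δ * (1 - lam) := (lt_div_iff₀ h2C).mp hP0
    nlinarith [mul_le_mul_of_nonneg_left h1 (by linarith : (0:ℝ) ≤ 2*C),
      pow_nonneg hlam.1.le P0]
  -- separation constant ε
  set Q : Fin N × Fin N × ℕ → ℝ :=
    fun σ => d σ.2.1 - d σ.1 - σ.2.2 * α with hQ
  set SS : Finset (Fin N × Fin N × ℕ) :=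
    (Finset.univ ×ˢ Finset.univ ×ˢ Finset.range P).filter
      (fun σ => ¬(σ.1 = σ.2.1 ∧ σ.2.2 = 0)) with hSS
  have hSSne : SS.Nonempty := by
    refine ⟨(0, 0, 1), ?_⟩
    rw [hSS, Finset.mem_filter]
    refine ⟨?_, by simp⟩
    simp only [Finset.mem_product, Finset.mem_univ, true_and, Finset.mem_range]
    omega
  set ε : ℝ := SS.inf' hSSne (fun σ => |Q σ - round (Q σ)|) with hε
  have hεpos : 0 < ε := by
    rw [hε, Finset.lt_inf'_iff]
    intro σ hσ
    rw [abs_pos, sub_ne_zero]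
    intro hc
    rw [hSS, Finset.mem_filter] at hσ
    have hh := horb σ.1 σ.2.1 σ.2.2 (round (Q σ)) (by
      have : Q σ = d σ.2.1 - d σ.1 - σ.2.2 * α := by rw [hQ]
      rw [← hc, this]; ring)
    exact hσ.2 ⟨hh.1, hh.2⟩
  have hεle : ∀ (i1 i2 : Fin N) (p : ℕ), p < P → ¬(i1 = i2 ∧ p = 0) →
      ε ≤ |Q (i1, i2, p) - round (Q (i1, i2, p))| := by
    intro i1 i2 p hp hcond
    apply Finset.inf'_le
    rw [hSS, Finset.mem_filter]
    refine ⟨?_, hcond⟩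
    simp only [Finset.mem_product, Finset.mem_univ, true_and, Finset.mem_range]
    exact hp
  -- Steinhaus
  have hXm : Measurable (Xser α b fun _ => lam) :=
    Xser_measurable hd hdmem hbper hbconst hlam
  set A : Set ℝ := (Xser α b fun _ => lam) ⁻¹' {v} ∩ Set.Ico (0:ℝ) 1 with hAdef
  have hAmeas : MeasurableSet A := (hXm (measurableSet_singleton v)).inter measurableSet_Ico
  have hsub : A - A ∈ 𝓝 (0:ℝ) :=
    MeasureTheory.Measure.sub_mem_nhds_zero_of_addHaar_pos volume A hAmeas (zero_lt_iff.mpr hA)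
  obtain ⟨r, hr0, hball⟩ := Metric.mem_nhds_iff.mp hsub
  -- choice of t
  have hζ := zeta_pos hd hdmem
  set t : ℝ := min (min (zeta d) ε) r / 2 with htdef
  have hmin0 : 0 < min (min (zeta d) ε) r := lt_min (lt_min hζ hεpos) hr0
  have ht0 : 0 < t := by rw [htdef]; linarith
  have htζ : t < zeta d := by
    have h1 : min (min (zeta d) ε) r ≤ zeta d := le_trans (min_le_left _ _) (min_le_left _ _)
    rw [htdef]; linarith
  have htε : t ≤ ε := by
    have h1 : min (min (zeta d) ε) r ≤ ε := le_trans (min_le_left _ _) (min_le_right _ _)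
    rw [htdef]; linarith
  have htr : t < r := by
    have h1 : min (min (zeta d) ε) r ≤ r := min_le_right _ _
    rw [htdef]; linarith
  -- a pair x, x + t ∈ A
  have htA : t ∈ A - A := hball (by
    rw [Metric.mem_ball, dist_zero_right, Real.norm_eq_abs, abs_of_pos ht0]
    exact htr)
  obtain ⟨x1, hx1, x2, hx2, hx12⟩ := Set.mem_sub.mp htA
  set x : ℝ := x2 with hxdef
  have hxt : x + t = x1 := by rw [hxdef, ← hx12]; ring
  have hXx : Xser α b (fun _ => lam) x = v := by
    have := hx2.1
    rwa [Set.mem_preimage, Set.mem_singleton_iff] at this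
  have hXxt : Xser α b (fun _ => lam) (x + t) = v := by
    rw [hxt]
    have := hx1.1
    rwa [Set.mem_preimage, Set.mem_singleton_iff] at this
  -- difference series
  set f : ℕ → ℝ := fun n => lam ^ n * b ((x + t) + n * α) - lam ^ n * b (x + n * α) with hf
  have hs1 := summable_term hd hdmem hbper hbconst (α := α) hlam (x + t)
  have hs2 := summable_term hd hdmem hbper hbconst (α := α) hlam x
  have hfsum : Summable f := hs1.sub hs2
  have htsum0 : ∑' n, f n = 0 := by
    calc ∑' n, f n
        = (∑' n : ℕ, lam ^ n * b ((x + t) + n * α)) - ∑' n : ℕ, lam ^ n * b (x + n * α) :=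
          Summable.tsum_sub hs1 hs2
    _ = Xser α b (fun _ => lam) (x + t) - Xser α b (fun _ => lam) x := by
          rw [Xser_eq, Xser_eq]
    _ = 0 := by rw [hXx, hXxt]; ring
  -- termwise bound
  have habs : ∀ m : ℕ, |f m| ≤ 2 * C * lam ^ m := by
    intro m
    have h1 : f m = lam ^ m * (b ((x + t) + m * α) - b (x + m * α)) := by rw [hf]; ring
    rw [h1, abs_mul, abs_pow, abs_of_pos hlam.1]
    have hb1 := abs_b_le hd hdmem hbper hbconst ((x + t) + m * α)
    have hb2 := abs_b_le hd hdmem hbper hbconst (x + m * α)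
    have h2 : |b ((x + t) + m * α) - b (x + m * α)| ≤ 2 * C := by
      have h3 : |b ((x + t) + m * α) - b (x + m * α)|
          ≤ |b ((x + t) + m * α)| + |b (x + m * α)| := abs_sub _ _
      linarith [h3, hb1, hb2, hC.le, hC.ge]
    calc lam ^ m * |b ((x + t) + m * α) - b (x + m * α)| ≤ lam ^ m * (2 * C) :=
          mul_le_mul_of_nonneg_left h2 (pow_nonneg hlam.1.le m)
    _ = 2 * C * lam ^ m := by ring
  -- crossings
  set Cr : ℕ → Prop := fun n => b ((x + t) + n * α) ≠ b (x + n * α) with hCrdef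
  have hfzero : ∀ n, ¬ Cr n → f n = 0 := by
    intro n hn
    have hn' : b ((x + t) + n * α) = b (x + n * α) := not_ne_iff.mp hn
    show lam ^ n * b ((x + t) + n * α) - lam ^ n * b (x + n * α) = 0
    rw [hn']
    ring
  have hex : ∃ n, Cr n := by
    obtain ⟨n, m, hu1, hu2⟩ := dense_step hirr (d (i0 + 1)) t ht0 x
    set u : ℝ := d (i0+1) + m - (x + n * α) with hu
    refine ⟨n, ?_⟩
    have hxl : b (x + n * α) = beta d b i0 := by
      have he1 : x + n * α = (eend d i0 - u) + ((m - cshift N i0 : ℤ) : ℝ) := by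
        rw [hu, eend_eq]; push_cast; ring
      rw [he1, bper_int hbper]
      exact b_at_left hd hdmem hbconst i0 hu1 (by linarith)
    have hxr : b ((x + t) + n * α) = beta d b (i0 + 1) := by
      have he2 : (x + t) + n * α = (d (i0+1) + (t - u)) + ((m : ℤ) : ℝ) := by
        rw [hu]; push_cast; ring
      rw [he2, bper_int hbper]
      exact b_at_right hd hdmem hbconst (i0+1) (by linarith) (by linarith)
    show b ((x + t) + n * α) ≠ b (x + n * α)
    rw [hxl, hxr]
    exact hne0
  set n₀ : ℕ := Nat.find hex with hn₀def
  have hCrn₀ : Cr n₀ := Nat.find_spec hex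
  have hmin : ∀ n, n < n₀ → ¬ Cr n := fun n hn => Nat.find_min hex hn
  have hne₀ : b ((x + n₀ * α) + t) ≠ b (x + n₀ * α) := by
    rw [show (x + n₀ * α) + t = (x + t) + n₀ * α by ring]
    exact hCrn₀
  obtain ⟨ia, ma, hlt₀, hle₀, hby₀, hbyt₀⟩ :=
    crossing_of_ne hd hdmem hbper hbconst ht0 htζ hne₀
  have hiaact : ia ∈ act := by
    rw [hact, Finset.mem_filter]
    refine ⟨Finset.mem_univ _, ?_⟩
    intro hc
    exact hne₀ (by rw [hbyt₀, hby₀, hc])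
  have hδa : δ ≤ |beta d b (ia+1) - beta d b ia| := Finset.inf'_le _ hiaact
  -- separation: no crossing in (n₀, n₀ + P)
  have hsep : ∀ n, n₀ < n → n < n₀ + P → ¬ Cr n := by
    intro n h1 h2 hCrn
    have hne₁ : b ((x + n * α) + t) ≠ b (x + n * α) := by
      rw [show (x + n * α) + t = (x + t) + n * α by ring]
      exact hCrn
    obtain ⟨ib, mb, hlt₁, hle₁, _, _⟩ :=
      crossing_of_ne hd hdmem hbper hbconst ht0 htζ hne₁
    set p : ℕ := n - n₀ with hp
    have hpc : (p : ℝ) = (n : ℝ) - (n₀ : ℝ) := by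
      rw [hp, Nat.cast_sub h1.le]
    have hple : ¬(ia + 1 = ib + 1 ∧ p = 0) := by
      intro hc
      have := hc.2
      omega
    have hQle := hεle (ia+1) (ib+1) p (by omega) hple
    set u0 : ℝ := d (ia+1) + ma - (x + n₀ * α) with hu0
    set u1 : ℝ := d (ib+1) + mb - (x + n * α) with hu1
    have h3 : 0 < u0 := by rw [hu0]; linarith
    have h4 : u0 ≤ t := by rw [hu0]; linarith
    have h5 : 0 < u1 := by rw [hu1]; linarith
    have h6 : u1 ≤ t := by rw [hu1]; linarith
    have hQeq : Q (ia+1, ib+1, p) - ((ma - mb : ℤ) : ℝ) = u1 - u0 := by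
      have hQv : Q (ia+1, ib+1, p) = d (ib+1) - d (ia+1) - p * α := by rw [hQ]
      rw [hQv, hu0, hu1, hpc]
      push_cast
      ring
    have h7 : |Q (ia+1, ib+1, p) - ((ma - mb : ℤ) : ℝ)| < t := by
      rw [hQeq, abs_lt]
      constructor <;> linarith
    have h8 := round_min (Q (ia+1, ib+1, p)) (ma - mb)
    linarith
  -- the tsum estimate
  have hsplit := Summable.sum_add_tsum_nat_add (f := f) (n₀ + 1) hfsum
  have hhead : ∑ i ∈ Finset.range (n₀+1), f i = f n₀ := by
    apply Finset.sum_eq_single_of_mem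
    · exact Finset.self_mem_range_succ n₀
    · intro i hi hine
      apply hfzero
      apply hmin
      rw [Finset.mem_range] at hi
      omega
  set T : ℝ := ∑' n, f (n + (n₀ + 1)) with hT
  have hfT : f n₀ + T = 0 := by
    rw [hhead, htsum0] at hsplit
    exact hsplit
  have habsT : |f n₀| = |T| := by
    have hTv : T = -(f n₀) := by linarith
    rw [hTv, abs_neg]
  have hsumshift : Summable (fun n => |f (n + (n₀+1))|) :=
    ((summable_nat_add_iff (n₀+1)).mpr hfsum).abs
  have hTle1 : |T| ≤ ∑' n, |f (n + (n₀ + 1))| := by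
    rw [hT]
    have hnorm := norm_tsum_le_tsum_norm (f := fun n => f (n + (n₀+1)))
      (by simpa [Real.norm_eq_abs] using hsumshift)
    simpa [Real.norm_eq_abs] using hnorm
  have hsplit2 := Summable.sum_add_tsum_nat_add (f := fun n => |f (n + (n₀+1))|) (P - 1) hsumshift
  have hzero2 : ∑ i ∈ Finset.range (P-1), |f (i + (n₀+1))| = 0 := by
    apply Finset.sum_eq_zero
    intro i hi
    rw [Finset.mem_range] at hi
    rw [hfzero (i + (n₀+1)) (hsep _ (by omega) (by omega)), abs_zero]
  have htail : ∑' n : ℕ, |f ((n + (P-1)) + (n₀+1))| ≤ 2*C*lam^(n₀+P) * (1 - lam)⁻¹ := by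
    have hpt : ∀ n : ℕ, |f ((n + (P-1)) + (n₀+1))| ≤ (2*C*lam^(n₀+P)) * lam ^ n := by
      intro n
      have harith : (n + (P-1)) + (n₀+1) = (n₀ + P) + n := by omega
      rw [harith]
      calc |f ((n₀+P) + n)| ≤ 2*C*lam^((n₀+P)+n) := habs _
      _ = (2*C*lam^(n₀+P)) * lam ^ n := by rw [pow_add]; ring
    have hsl : Summable (fun n : ℕ => |f ((n + (P-1)) + (n₀+1))|) :=
      (summable_nat_add_iff (P-1)).mpr hsumshift
    have hsr : Summable (fun n : ℕ => (2*C*lam^(n₀+P)) * lam ^ n) :=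
      (summable_geometric_of_lt_one hlam.1.le hlam.2).mul_left _
    calc ∑' n : ℕ, |f ((n + (P-1)) + (n₀+1))|
        ≤ ∑' n : ℕ, (2*C*lam^(n₀+P)) * lam ^ n := Summable.tsum_le_tsum hpt hsl hsr
    _ = (2*C*lam^(n₀+P)) * ∑' n : ℕ, lam ^ n := tsum_mul_left
    _ = 2*C*lam^(n₀+P) * (1-lam)⁻¹ := by
          rw [tsum_geometric_of_lt_one hlam.1.le hlam.2]
  have hTle : |T| ≤ 2*C*lam^(n₀+P) * (1-lam)⁻¹ := by
    have heq : ∑' n, |f (n + (n₀+1))| = ∑' n : ℕ, |f ((n + (P-1)) + (n₀+1))| := by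
      rw [← hsplit2, hzero2, zero_add]
    rw [heq] at hTle1
    linarith
  have hfn₀ : f n₀ = lam^n₀ * (beta d b (ia+1) - beta d b ia) := by
    have e1 : (x + t) + n₀ * α = (x + n₀ * α) + t := by ring
    rw [hf]
    simp only
    rw [e1, hbyt₀, hby₀]
    ring
  have hlow : lam^n₀ * δ ≤ |f n₀| := by
    rw [hfn₀, abs_mul, abs_pow, abs_of_pos hlam.1]
    exact mul_le_mul_of_nonneg_left hδa (pow_nonneg hlam.1.le n₀)
  have hfinal : lam^n₀ * δ ≤ lam^n₀ * (2*C*lam^P * (1-lam)⁻¹) := by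
    calc lam^n₀ * δ ≤ |f n₀| := hlow
    _ = |T| := habsT
    _ ≤ 2*C*lam^(n₀+P) * (1-lam)⁻¹ := hTle
    _ = lam^n₀ * (2*C*lam^P * (1-lam)⁻¹) := by rw [pow_add]; ring
  have hδle2 : δ ≤ 2*C*lam^P * (1-lam)⁻¹ :=
    le_of_mul_le_mul_left hfinal (pow_pos hlam.1 n₀)
  have h1l : 0 < 1 - lam := by linarith [hlam.2]
  have hfin2 := mul_le_mul_of_nonneg_right hδle2 h1l.le
  rw [mul_assoc, inv_mul_cancel₀ (ne_of_gt h1l), mul_one] at hfin2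
  linarith


end PA

/-- If `r ≡ λ` is constant and the points `d_0,…,d_{N−1}` lie in pairwise distinct orbits of
the rotation, then `P_X` is purely atomic iff `b` is constant, in which case
`P_X = δ_{b/(1−λ)}`. -/
theorem purely_atomic_iff_b_constant_distinct_orbits
    (α : ℝ) (hα : α ∈ Set.Ioo (0 : ℝ) 1) (hirr : Irrational α)
    (N : ℕ) [NeZero N] (d : Fin N → ℝ)
    (hd : StrictMono d) (hdmem : ∀ i, d i ∈ Set.Ico (0 : ℝ) 1)
    (lam : ℝ) (hlam : lam ∈ Set.Ioo (0 : ℝ) 1)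
    (b : ℝ → ℝ) (hbper : Function.Periodic b 1)
    (hbconst : ∀ i : Fin N, ∀ x ∈ arc d i, ∀ y ∈ arc d i, b x = b y)
    -- the `d_i` lie in pairwise distinct orbits of the rotation
    (horb : ∀ i j : Fin N, ∀ p : ℕ, ∀ m : ℤ, d j = d i + p * α + m → i = j ∧ p = 0) :
    ((∃ s : Set ℝ, s.Countable ∧
        Measure.map (Xser α b (fun _ => lam)) (volume.restrict (Set.Ico (0 : ℝ) 1)) s = 1)
      ↔ ∃ β : ℝ, ∀ x : ℝ, b x = β)
    ∧ ∀ β : ℝ, (∀ x : ℝ, b x = β) →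
        Measure.map (Xser α b (fun _ => lam)) (volume.restrict (Set.Ico (0 : ℝ) 1))
          = Measure.dirac (β / (1 - lam)) := by
  classical
  have hXm : Measurable (Xser α b fun _ => lam) :=
    PA.Xser_measurable hd hdmem hbper hbconst hlam
  refine ⟨⟨?_, ?_⟩, ?_⟩
  · rintro ⟨s, hsc, hs1⟩
    have hv : ∃ v ∈ s,
        Measure.map (Xser α b fun _ => lam) (volume.restrict (Set.Ico (0:ℝ) 1)) {v} ≠ 0 := by
      by_contra hc
      push_neg at hc
      have hs0 : Measure.map (Xser α b fun _ => lam) (volume.restrict (Set.Ico (0:ℝ) 1)) s = 0 := by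
        have hsu : s = ⋃ v ∈ s, {v} := (Set.biUnion_of_singleton s).symm
        rw [hsu]
        exact (measure_biUnion_null_iff hsc).mpr hc
      exact one_ne_zero (hs1.symm.trans hs0)
    obtain ⟨v, hvs, hv0⟩ := hv
    have hA : volume ((Xser α b fun _ => lam) ⁻¹' {v} ∩ Set.Ico (0:ℝ) 1) ≠ 0 := by
      rw [Measure.map_apply hXm (measurableSet_singleton v),
        Measure.restrict_apply (hXm (measurableSet_singleton v))] at hv0
      exact hv0
    have hstep : ∀ i : Fin N, PA.beta d b (i + 1) = PA.beta d b i := fun i =>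
      PA.beta_const_of_atom hd hdmem hbper hbconst hirr hlam horb hA i
    refine ⟨PA.beta d b 0, ?_⟩
    open Fin.NatCast in
    have hnat : ∀ k : ℕ, PA.beta d b (k : Fin N) = PA.beta d b 0 := by
      intro k
      induction k with
      | zero => norm_num
      | succ k ih =>
        have hcast : ((k+1 : ℕ) : Fin N) = ((k : ℕ) : Fin N) + 1 := by push_cast; ring
        rw [hcast, hstep, ih]
    have hall : ∀ i : Fin N, PA.beta d b i = PA.beta d b 0 := by
      intro i
      have hcv := hnat i.val
      open Fin.NatCast in
      rwa [Fin.cast_val_eq_self] at hcv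
    intro x
    obtain ⟨i, _, hbx⟩ := PA.mem_arc_reduce hd hdmem hbper hbconst x
    rw [hbx, hall i]
  · rintro ⟨β, hβ⟩
    refine ⟨{β / (1 - lam)}, Set.countable_singleton _, ?_⟩
    rw [PA.map_const_measure hlam β hβ]
    simp
  · intro β hβ
    exact PA.map_const_measure hlam β hβ
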